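/- Let (Γ, ⪯) be a left-ordered group. Every reinforced crossing for (Γ, ⪯) is a crossing for (Γ, ⪯). -/

import Mathlib

/-- A crossing for a left-ordered group `(Γ, ≤)`. -/
def IsCrossing {Γ : Type*} [Group Γ] [LinearOrder Γ] (f g u v w : Γ) : Prop :=
  u < w ∧ w < v ∧
  (∀ n : ℕ, 0 < n → g ^ n * u < v ∧ u < f ^ n * v) ∧
  ∃ M N : ℕ, 0 < M ∧ 0 < N ∧ f ^ N * v < w ∧ w < g ^ M * u

/-- A reinforced crossing for a left-ordered group `(Γ, ≤)`: a 5-tuple `(f, g, u, v, w)`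
with `u < w < v`, `f u > u` and `g v < v`, and positive integers `M, N` with
`f^N v < w < g^M u`. -/
def IsReinforcedCrossing {Γ : Type*} [Group Γ] [LinearOrder Γ] (f g u v w : Γ) : Prop :=
  u < w ∧ w < v ∧ u < f * u ∧ g * v < v ∧
  ∃ M N : ℕ, 0 < M ∧ 0 < N ∧ f ^ N * v < w ∧ w < g ^ M * u

private lemma pow_lt_self {Γ : Type*} [Group Γ] [LinearOrder Γ]
    [CovariantClass Γ Γ (· * ·) (· ≤ ·)] {g v : Γ} (h : g * v < v) :
    ∀ n : ℕ, 0 < n → g ^ n * v < v := by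
  intro n hn
  induction n with
  | zero => exact absurd hn (lt_irrefl 0)
  | succ k ih =>
    rcases Nat.eq_zero_or_pos k with hk | hk
    · subst hk; simpa using h
    · calc g ^ (k + 1) * v = g ^ k * (g * v) := by rw [pow_succ, mul_assoc]
        _ < g ^ k * v := mul_lt_mul_right h _
        _ < v := ih hk

private lemma self_lt_pow {Γ : Type*} [Group Γ] [LinearOrder Γ]
    [CovariantClass Γ Γ (· * ·) (· ≤ ·)] {f u : Γ} (h : u < f * u) :
    ∀ n : ℕ, 0 < n → u < f ^ n * u := by
  intro n hn
  induction n with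
  | zero => exact absurd hn (lt_irrefl 0)
  | succ k ih =>
    rcases Nat.eq_zero_or_pos k with hk | hk
    · subst hk; simpa using h
    · calc u < f ^ k * u := ih hk
        _ < f ^ k * (f * u) := mul_lt_mul_right h _
        _ = f ^ (k + 1) * u := by rw [pow_succ, mul_assoc]

/-- Every reinforced crossing is a crossing. -/
theorem isCrossing_of_isReinforcedCrossing {Γ : Type*} [Group Γ] [LinearOrder Γ]
    [CovariantClass Γ Γ (· * ·) (· ≤ ·)] (f g u v w : Γ)
    (h : IsReinforcedCrossing f g u v w) : IsCrossing f g u v w := by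
  obtain ⟨huw, hwv, hfu, hgv, M, N, hM, hN, h1, h2⟩ := h
  refine ⟨huw, hwv, ?_, M, N, hM, hN, h1, h2⟩
  intro n hn
  constructor
  · calc g ^ n * u < g ^ n * v := mul_lt_mul_right (huw.trans hwv) _
      _ < v := pow_lt_self hgv n hn
  · calc u < f ^ n * u := self_lt_pow hfu n hn
      _ < f ^ n * v := mul_lt_mul_right (huw.trans hwv) _
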